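/- Let m ≥ 1 be an integer, p > 0, q ≠ 0 and Λ ≥ 0 real numbers. Suppose a, b : (0, ∞) → ℝ are differentiable, positive, solve the ODE system a'(τ) = m q² a(τ)²/b(τ)² and b'(τ) = 2p − q² a(τ)/b(τ), satisfy the first-integral relation a(τ)/b(τ) = 2p/((m+1)q²) − (Λ a(τ))^{(m+1)/m} for all τ > 0, and lim_{τ→0⁺} b(τ) = 0. Then for every τ > 0 one has (2mp/(m+1)) τ ≤ b(τ) ≤ 2p τ; in particular b(τ) → ∞ as τ → ∞. -/

import Mathlib

/-- linear growth bounds for `b` along the U(1)-bundle Ricci flow ODE system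
(the analytic content of the type-I property). -/
theorem stmt_2 (m : ℕ) (hm : 1 ≤ m) (p q Λ : ℝ) (hp : 0 < p) (hq : q ≠ 0) (hΛ : 0 ≤ Λ)
    (a b : ℝ → ℝ)
    (hapos : ∀ τ ∈ Set.Ioi (0 : ℝ), 0 < a τ)
    (hbpos : ∀ τ ∈ Set.Ioi (0 : ℝ), 0 < b τ)
    (ha : ∀ τ ∈ Set.Ioi (0 : ℝ), HasDerivAt a ((m : ℝ) * q ^ 2 * (a τ) ^ 2 / (b τ) ^ 2) τ)
    (hb : ∀ τ ∈ Set.Ioi (0 : ℝ), HasDerivAt b (2 * p - q ^ 2 * a τ / b τ) τ)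
    (hfi : ∀ τ ∈ Set.Ioi (0 : ℝ),
      a τ / b τ = 2 * p / (((m : ℝ) + 1) * q ^ 2) - (Λ * a τ) ^ (((m : ℝ) + 1) / m))
    (hb0 : Filter.Tendsto b (nhdsWithin 0 (Set.Ioi 0)) (nhds 0)) :
    (∀ τ ∈ Set.Ioi (0 : ℝ), 2 * (m : ℝ) * p / (m + 1) * τ ≤ b τ ∧ b τ ≤ 2 * p * τ) ∧
    Filter.Tendsto b Filter.atTop Filter.atTop := by
  have hq2 : (0:ℝ) < q ^ 2 := by positivity
  have hm1 : (0:ℝ) < (m:ℝ) + 1 := by positivity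
  set c₁ : ℝ := 2 * (m:ℝ) * p / (m + 1) with hc₁
  have hc₁pos : 0 < c₁ := by
    have : (0:ℝ) < (m:ℝ) := by exact_mod_cast hm
    positivity
  -- derivative bounds
  have hder : ∀ τ ∈ Set.Ioi (0:ℝ),
      c₁ ≤ 2 * p - q ^ 2 * a τ / b τ ∧ 2 * p - q ^ 2 * a τ / b τ ≤ 2 * p := by
    intro τ hτ
    have hab : 0 < a τ / b τ := div_pos (hapos τ hτ) (hbpos τ hτ)
    have hub : a τ / b τ ≤ 2 * p / (((m : ℝ) + 1) * q ^ 2) := by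
      rw [hfi τ hτ]
      have : (0:ℝ) ≤ (Λ * a τ) ^ (((m : ℝ) + 1) / m) :=
        Real.rpow_nonneg (mul_nonneg hΛ (hapos τ hτ).le) _
      linarith
    constructor
    · have h1 : q ^ 2 * (a τ / b τ) ≤ q ^ 2 * (2 * p / (((m : ℝ) + 1) * q ^ 2)) :=
        mul_le_mul_of_nonneg_left hub (le_of_lt hq2)
      have h2 : q ^ 2 * (2 * p / (((m : ℝ) + 1) * q ^ 2)) = 2 * p / ((m:ℝ) + 1) := by
        field_simp
      have h3 : q ^ 2 * a τ / b τ = q ^ 2 * (a τ / b τ) := by ring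
      have h4 : c₁ = 2 * p - 2 * p / ((m:ℝ) + 1) := by
        rw [hc₁]; field_simp; ring
      rw [h4, h3]
      linarith [h1, h2.le]
    · have : 0 < q ^ 2 * a τ / b τ := by
        rw [show q ^ 2 * a τ / b τ = q ^ 2 * (a τ / b τ) from by ring]
        positivity
      linarith
  -- auxiliary monotonicity lemmas
  have key : ∀ c : ℝ, (∀ τ ∈ Set.Ioi (0:ℝ), HasDerivAt (fun s => b s - c * s)
      ((2 * p - q ^ 2 * a τ / b τ) - c) τ) := by
    intro c τ hτ
    exact ((hb τ hτ).sub ((hasDerivAt_id' τ).const_mul c)).congr_deriv (by ring)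
  have hcont : ∀ c : ℝ, ContinuousOn (fun s => b s - c * s) (Set.Ioi 0) := by
    intro c s hs
    exact ((key c s hs).continuousAt).continuousWithinAt
  have hdiff : ∀ c : ℝ, DifferentiableOn ℝ (fun s => b s - c * s) (interior (Set.Ioi 0)) := by
    intro c s hs
    rw [interior_Ioi] at hs
    exact ((key c s hs).differentiableAt).differentiableWithinAt
  have hmono : MonotoneOn (fun s => b s - c₁ * s) (Set.Ioi 0) := by
    apply monotoneOn_of_deriv_nonneg (convex_Ioi 0) (hcont c₁) (hdiff c₁)
    intro s hs
    rw [interior_Ioi] at hs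
    rw [(key c₁ s hs).deriv]
    linarith [(hder s hs).1]
  have hanti : AntitoneOn (fun s => b s - (2*p) * s) (Set.Ioi 0) := by
    apply antitoneOn_of_deriv_nonpos (convex_Ioi 0) (hcont (2*p)) (hdiff (2*p))
    intro s hs
    rw [interior_Ioi] at hs
    rw [(key (2*p) s hs).deriv]
    linarith [(hder s hs).2]
  -- limits at 0
  have hlim : ∀ c : ℝ, Filter.Tendsto (fun s => b s - c * s)
      (nhdsWithin 0 (Set.Ioi 0)) (nhds 0) := by
    intro c
    have hcts : Continuous (fun s : ℝ => c * s) := continuous_const.mul continuous_id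
    have h2 : Filter.Tendsto (fun s : ℝ => c * s) (nhdsWithin 0 (Set.Ioi 0)) (nhds (c * 0)) :=
      (hcts.tendsto 0).mono_left nhdsWithin_le_nhds
    rw [mul_zero] at h2
    simpa using hb0.sub h2
  have hbds : ∀ τ ∈ Set.Ioi (0:ℝ), c₁ * τ ≤ b τ ∧ b τ ≤ 2 * p * τ := by
    intro τ hτ
    have hmem : Set.Ioo (0:ℝ) τ ∈ nhdsWithin (0:ℝ) (Set.Ioi 0) :=
      Ioo_mem_nhdsGT_of_mem ⟨le_refl 0, hτ⟩
    constructor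
    · have : (0:ℝ) ≤ b τ - c₁ * τ := by
        refine le_of_tendsto (hlim c₁) ?_
        filter_upwards [hmem] with s hs
        exact hmono hs.1 hτ hs.2.le
      linarith
    · have : b τ - 2 * p * τ ≤ 0 := by
        refine ge_of_tendsto (hlim (2*p)) ?_
        filter_upwards [hmem] with s hs
        exact hanti hs.1 hτ hs.2.le
      linarith
  refine ⟨fun τ hτ => (hbds τ hτ), ?_⟩
  have h1 : Filter.Tendsto (fun τ : ℝ => c₁ * τ) Filter.atTop Filter.atTop :=
    Filter.Tendsto.const_mul_atTop hc₁pos Filter.tendsto_id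
  apply Filter.tendsto_atTop_mono' _ _ h1
  filter_upwards [Filter.eventually_gt_atTop (0:ℝ)] with τ hτ
  exact (hbds τ hτ).1
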